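/- Let D be a symmetric positive-semidefinite d×d matrix and let A₀ ∈ 𝒫⁺⁺, A₁ ∈ 𝒫⁺ commute. Define F(t) = (tA₁+(1−t)A₀) D (tA₁+(1−t)A₀) and U(t) = 2(tA₁+(1−t)A₀)^{−1}(A₁−A₀) for t ∈ [0,1). Then F′(t) = (F(t)U(t))^{Sym} = ½(F(t)U(t) + U(t)F(t)), and the energy ∫₀¹ Tr(F(t)U(t)U(t)) dt equals 4 · Tr(D(A₁−A₀)²) = 4 D(A₁−A₀):(A₁−A₀). -/

import Mathlib

open Matrix MeasureTheory

attribute [local instance] Matrix.frobeniusNormedAddCommGroup Matrix.frobeniusNormedSpace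

attribute [local instance] Matrix.frobeniusNormedRing Matrix.frobeniusNormedAlgebra

private lemma bures_posdef {d : ℕ} {A₀ A₁ : Matrix (Fin d) (Fin d) ℝ}
    (hA₀ : A₀.PosDef) (hA₁ : A₁.PosSemidef) {t : ℝ} (ht0 : 0 ≤ t) (ht1 : t < 1) :
    (t • A₁ + (1 - t) • A₀).PosDef := by
  rw [posDef_iff_dotProduct_mulVec]
  constructor
  · show _ = _
    simp [← conjTranspose_eq_transpose_of_trivial, hA₀.1.eq, hA₁.1.eq]
  · intro x hx
    simp only [add_mulVec, smul_mulVec, dotProduct_add, dotProduct_smul, smul_eq_mul]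
    exact add_pos_of_nonneg_of_pos (mul_nonneg ht0 ((posSemidef_iff_dotProduct_mulVec.mp hA₁).2 x)) (mul_pos (by linarith) ((posDef_iff_dotProduct_mulVec.mp hA₀).2 hx))

/-- For commuting `A₀ ∈ 𝒫⁺⁺`, `A₁ ∈ 𝒫⁺` and `D ∈ 𝒫⁺`, the curve
`F(t) = (tA₁+(1-t)A₀) D (tA₁+(1-t)A₀)` with potential
`U(t) = 2 (tA₁+(1-t)A₀)⁻¹ (A₁-A₀)` satisfies
`F'(t) = ½ (F(t) U(t) + U(t) F(t))` on `[0,1)` and has constant energy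
`∫₀¹ Tr (F U U) dt = 4 Tr (D (A₁-A₀)²)`. -/
theorem bures_energy {d : ℕ} (A₀ A₁ D : Matrix (Fin d) (Fin d) ℝ)
    (hA₀ : A₀.PosDef) (hA₁ : A₁.PosSemidef) (hD : D.PosSemidef)
    (hcomm : A₀ * A₁ = A₁ * A₀)
    (F U : ℝ → Matrix (Fin d) (Fin d) ℝ)
    (hF : ∀ t : ℝ, F t = (t • A₁ + (1 - t) • A₀) * D * (t • A₁ + (1 - t) • A₀))
    (hU : ∀ t : ℝ, U t = (2 : ℝ) • ((t • A₁ + (1 - t) • A₀)⁻¹ * (A₁ - A₀))) :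
    (∀ t ∈ Set.Ico (0 : ℝ) 1,
      HasDerivAt F ((1 / 2 : ℝ) • (F t * U t + U t * F t)) t) ∧
    ∫ t in (0 : ℝ)..1, (F t * U t * U t).trace
      = 4 * (D * (A₁ - A₀) * (A₁ - A₀)).trace := by
  set Δ : Matrix (Fin d) (Fin d) ℝ := A₁ - A₀ with hΔ
  -- basic facts about B t for t ∈ [0,1)
  have key : ∀ t : ℝ, 0 ≤ t → t < 1 →
      (t • A₁ + (1 - t) • A₀) * Δ = Δ * (t • A₁ + (1 - t) • A₀) ∧
      (t • A₁ + (1 - t) • A₀)⁻¹ * (t • A₁ + (1 - t) • A₀) = 1 ∧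
      (t • A₁ + (1 - t) • A₀) * (t • A₁ + (1 - t) • A₀)⁻¹ = 1 := by
    intro t ht0 ht1
    have hpd := bures_posdef hA₀ hA₁ ht0 ht1
    have hdet : IsUnit (t • A₁ + (1 - t) • A₀).det := isUnit_iff_ne_zero.mpr hpd.det_pos.ne'
    refine ⟨?_, nonsing_inv_mul _ hdet, mul_nonsing_inv _ hdet⟩
    have hA₀Δ : A₀ * Δ = Δ * A₀ := by simp [hΔ, mul_sub, sub_mul, hcomm]
    have hA₁Δ : A₁ * Δ = Δ * A₁ := by simp [hΔ, mul_sub, sub_mul, hcomm]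
    simp [add_mul, mul_add, smul_mul_assoc, mul_smul_comm, hA₀Δ, hA₁Δ]
  have hcomm' : ∀ t : ℝ, 0 ≤ t → t < 1 →
      (t • A₁ + (1 - t) • A₀)⁻¹ * Δ * (t • A₁ + (1 - t) • A₀) = Δ := by
    intro t ht0 ht1
    obtain ⟨h1, h2, _⟩ := key t ht0 ht1
    calc (t • A₁ + (1 - t) • A₀)⁻¹ * Δ * (t • A₁ + (1 - t) • A₀)
        = (t • A₁ + (1 - t) • A₀)⁻¹ * (Δ * (t • A₁ + (1 - t) • A₀)) := by rw [mul_assoc]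
      _ = (t • A₁ + (1 - t) • A₀)⁻¹ * ((t • A₁ + (1 - t) • A₀) * Δ) := by rw [h1]
      _ = ((t • A₁ + (1 - t) • A₀)⁻¹ * (t • A₁ + (1 - t) • A₀)) * Δ := by rw [mul_assoc]
      _ = Δ := by rw [h2, one_mul]
  constructor
  · intro t ⟨ht0, ht1⟩
    obtain ⟨h1, h2, h3⟩ := key t ht0 ht1
    set B := t • A₁ + (1 - t) • A₀ with hB
    have hderiv : HasDerivAt F (Δ * D * B + B * D * Δ) t := by
      have hFfun : F = fun s : ℝ => (s • A₁ + (1 - s) • A₀) * D * (s • A₁ + (1 - s) • A₀) :=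
        funext hF
      rw [hFfun]
      have hBd : HasDerivAt (fun s : ℝ => s • A₁ + (1 - s) • A₀) Δ t := by
        have h1' : HasDerivAt (fun s : ℝ => s • A₁) A₁ t := by
          have h := (hasDerivAt_id t).smul_const A₁
          simp at h
          exact h
        have h2' : HasDerivAt (fun s : ℝ => (1 - s) • A₀) (-A₀) t := by
          have h := ((hasDerivAt_const t (1 : ℝ)).sub (hasDerivAt_id t)).smul_const A₀
          simp at h
          exact h
        have h := h1'.add h2'
        simp [hΔ, sub_eq_add_neg] at h
        exact h
      have := (hBd.mul (hasDerivAt_const t D)).mul hBd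
      simp [mul_zero, add_zero] at this
      exact this
    have heq : (1 / 2 : ℝ) • (F t * U t + U t * F t) = Δ * D * B + B * D * Δ := by
      rw [hF t, hU t, ← hB]
      have e1 : B * D * B * ((2 : ℝ) • (B⁻¹ * Δ)) = (2 : ℝ) • (B * D * Δ) := by
        rw [mul_smul_comm]
        congr 1
        calc B * D * B * (B⁻¹ * Δ) = B * D * (B * B⁻¹) * Δ := by
              simp only [mul_assoc]
          _ = B * D * Δ := by rw [h3, mul_one]
      have e2 : ((2 : ℝ) • (B⁻¹ * Δ)) * (B * D * B) = (2 : ℝ) • (Δ * D * B) := by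
        rw [smul_mul_assoc]
        congr 1
        calc B⁻¹ * Δ * (B * D * B) = (B⁻¹ * Δ * B) * D * B := by
              simp only [mul_assoc]
          _ = Δ * D * B := by rw [hcomm' t ht0 ht1]
      rw [e1, e2, ← smul_add, smul_smul]
      norm_num
      abel
    rw [heq]
    exact hderiv
  · have hconst : ∀ t ∈ Set.Ioo (0 : ℝ) 1,
        (F t * U t * U t).trace = 4 * (D * Δ * Δ).trace := by
      intro t ⟨ht0, ht1⟩
      obtain ⟨h1, h2, h3⟩ := key t ht0.le ht1
      set B := t • A₁ + (1 - t) • A₀ with hB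
      have e1 : F t * U t * U t = (4 : ℝ) • (B * (D * Δ * (B⁻¹ * Δ))) := by
        rw [hF t, hU t, ← hB]
        simp only [mul_smul_comm, smul_mul_assoc, smul_smul]
        norm_num
        calc B * D * B * (B⁻¹ * Δ) * (B⁻¹ * Δ)
            = B * D * (B * B⁻¹) * Δ * (B⁻¹ * Δ) := by simp only [mul_assoc]
          _ = B * D * Δ * (B⁻¹ * Δ) := by rw [h3, mul_one]
          _ = B * (D * Δ * (B⁻¹ * Δ)) := by simp only [mul_assoc]
      rw [e1, trace_smul, smul_eq_mul]
      congr 1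
      rw [trace_mul_comm]
      calc (D * Δ * (B⁻¹ * Δ) * B).trace
          = (D * Δ * (B⁻¹ * Δ * B)).trace := by simp only [mul_assoc]
        _ = (D * Δ * Δ).trace := by rw [hcomm' t ht0.le ht1]
    rw [intervalIntegral.integral_of_le zero_le_one,
      ← MeasureTheory.setIntegral_congr_set MeasureTheory.Ioo_ae_eq_Ioc,
      MeasureTheory.setIntegral_congr_fun measurableSet_Ioo hconst]
    simp [Real.volume_Ioo]
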